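/- Every priceable committee is weakly priceable: if a k-committee W with respect to an n-voter profile admits a price r > 0 and payment functions f_i satisfying the Peters–Skowron priceability conditions, then there exists a price system p[i,c] ≥ 0 with ∑_i p[i,c] ≤ n/k for all candidates c, and p[i,d] + ∑_{c ∈ A_i ∩ W} p[i,c] > 1 for every voter i and every d ∈ A_i \ W. -/

import Mathlib

/-- every priceable committee is weakly priceable. -/
theorem stmt14 {C : Type*} [Fintype C] [DecidableEq C]
    (k n : ℕ) (hk : 0 < k) (hn : 0 < n)
    (P : Fin n → Finset C) (W : Finset C) (hW : W.card = k)
    (r : ℚ) (f : Fin n → C → ℚ) (hr : 0 < r)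
    (hf01 : ∀ i c, 0 ≤ f i c ∧ f i c ≤ 1)
    (hsupp : ∀ i c, 0 < f i c → c ∈ P i)
    (hbudget : ∀ i, (∑ c, f i c) ≤ 1)
    (hprice : ∀ c ∈ W, (∑ i, f i c) = r)
    (hzero : ∀ c ∉ W, (∑ i, f i c) = 0)
    (hcond5 : ∀ c ∉ W,
      (∑ i ∈ Finset.univ.filter (fun i => c ∈ P i), (1 - ∑ c' ∈ W, f i c')) ≤ r) :
    ∃ p : Fin n → C → ℚ,
      (∀ i c, 0 ≤ p i c) ∧
      (∀ c, (∑ i, p i c) ≤ (n : ℚ) / k) ∧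
      (∀ i : Fin n, ∀ d ∈ P i \ W, 1 < p i d + ∑ c ∈ P i ∩ W, p i c) := by
  classical
  have hkq : (0:ℚ) < k := by exact_mod_cast hk
  have hnq : (0:ℚ) < n := by exact_mod_cast hn
  set s : Fin n → ℚ := fun i => ∑ c' ∈ W, f i c' with hs_def
  have hf0 : ∀ i c, 0 ≤ f i c := fun i c => (hf01 i c).1
  have hfP : ∀ i c, c ∉ P i → f i c = 0 := by
    intro i c hc
    by_contra h
    exact hc (hsupp i c (lt_of_le_of_ne (hf0 i c) (Ne.symm h)))
  have hs0 : ∀ i, 0 ≤ s i := fun i => Finset.sum_nonneg fun c _ => hf0 i c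
  have hs1 : ∀ i, s i ≤ 1 := by
    intro i
    refine le_trans ?_ (hbudget i)
    exact Finset.sum_le_sum_of_subset_of_nonneg (Finset.subset_univ W)
      (fun c _ _ => hf0 i c)
  have hsumW : (∑ i, s i) = (k:ℚ) * r := by
    have : (∑ i, ∑ c ∈ W, f i c) = ∑ c ∈ W, ∑ i, f i c := Finset.sum_comm
    rw [hs_def]
    simp only [this]
    rw [Finset.sum_congr rfl (fun c hc => hprice c hc), Finset.sum_const, hW,
      nsmul_eq_mul]
  have hrle : r ≤ (n:ℚ) / k := by
    rw [le_div_iff₀ hkq]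
    calc r * k = (k:ℚ) * r := by ring
    _ = ∑ i, s i := hsumW.symm
    _ ≤ ∑ _i : Fin n, (1:ℚ) := Finset.sum_le_sum fun i _ => hs1 i
    _ = n := by simp
  set T : C → ℚ := fun c => ∑ i ∈ Finset.univ.filter (fun i => c ∈ P i), (1 - s i)
    with hT_def
  have hTr : ∀ c ∉ W, T c ≤ r := fun c hc => hcond5 c hc
  have hTtot : ∀ c, T c ≤ (n:ℚ) - k * r := by
    intro c
    have h1 : T c ≤ ∑ i : Fin n, (1 - s i) := by
      refine Finset.sum_le_sum_of_subset_of_nonneg (Finset.subset_univ _) ?_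
      intro i _ _
      linarith [hs1 i]
    have h2 : (∑ i : Fin n, (1 - s i)) = (n:ℚ) - k * r := by
      rw [Finset.sum_sub_distrib, hsumW]
      simp
    linarith
  have hTlt : ∀ c ∉ W, T c < (n:ℚ) / k := by
    intro c hc
    rcases lt_or_eq_of_le hrle with h | h
    · exact lt_of_le_of_lt (hTr c hc) h
    · have : (n:ℚ) - k * r = 0 := by
        field_simp at h
        linarith [h]
      have := hTtot c
      have hpos : (0:ℚ) < (n:ℚ)/k := div_pos hnq hkq
      linarith
  -- choose ε
  set S : Finset C := Finset.univ.filter (fun c => c ∉ W) with hS_def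
  obtain ⟨ε, hε, hεbound⟩ :
      ∃ ε : ℚ, 0 < ε ∧ ∀ c ∉ W, T c + ε * n ≤ (n:ℚ)/k := by
    rcases S.eq_empty_or_nonempty with hSe | hSne
    · refine ⟨1, one_pos, fun c hc => ?_⟩
      exfalso
      have : c ∈ S := by simp [hS_def, hc]
      simp [hSe] at this
    · set m := S.inf' hSne (fun c => (n:ℚ)/k - T c) with hm_def
      have hmpos : 0 < m := by
        rw [hm_def, Finset.lt_inf'_iff]
        intro c hc
        have hcW : c ∉ W := by simpa [hS_def] using hc
        linarith [hTlt c hcW]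
      refine ⟨m / (2 * n), by positivity, fun c hc => ?_⟩
      have hmc : m ≤ (n:ℚ)/k - T c := by
        apply Finset.inf'_le
        simp [hS_def, hc]
      have : m / (2 * n) * n = m / 2 := by field_simp
      rw [this]
      linarith
  refine ⟨fun i c => if c ∈ W then f i c else (if c ∈ P i then (1 - s i) + ε else 0),
    ?_, ?_, ?_⟩
  · intro i c
    by_cases hcW : c ∈ W
    · simpa [hcW] using hf0 i c
    · by_cases hcP : c ∈ P i
      · simp only [hcW, hcP, if_false, if_true]
        linarith [hs1 i]
      · simp [hcW, hcP]
  · intro c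
    by_cases hcW : c ∈ W
    · simp only [hcW, if_true]
      rw [hprice c hcW]
      exact hrle
    · simp only [hcW, if_false]
      have : (∑ i, if c ∈ P i then (1 - s i) + ε else 0)
          = T c + ε * (Finset.univ.filter (fun i => c ∈ P i)).card := by
        rw [Finset.sum_ite, Finset.sum_const_zero, add_zero, hT_def]
        rw [Finset.sum_add_distrib, Finset.sum_const, nsmul_eq_mul]
        ring
      rw [this]
      have hcard : ((Finset.univ.filter (fun i => c ∈ P i)).card : ℚ) ≤ n := by
        have := Finset.card_filter_le (Finset.univ : Finset (Fin n))
          (fun i => c ∈ P i)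
        simp only [Finset.card_univ, Fintype.card_fin] at this
        exact_mod_cast this
      have h1 : ε * ((Finset.univ.filter (fun i => c ∈ P i)).card : ℚ) ≤ ε * n :=
        mul_le_mul_of_nonneg_left hcard (le_of_lt hε)
      linarith [hεbound c hcW]
  · intro i d hd
    rw [Finset.mem_sdiff] at hd
    obtain ⟨hdP, hdW⟩ := hd
    have hpd : (if d ∈ W then f i d else (if d ∈ P i then (1 - s i) + ε else 0))
        = (1 - s i) + ε := by simp [hdW, hdP]
    beta_reduce
    rw [hpd]
    have hsum : (∑ c ∈ P i ∩ W,
        if c ∈ W then f i c else (if c ∈ P i then (1 - s i) + ε else 0)) = s i := by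
      have h1 : (∑ c ∈ P i ∩ W,
          if c ∈ W then f i c else (if c ∈ P i then (1 - s i) + ε else 0))
          = ∑ c ∈ P i ∩ W, f i c := by
        apply Finset.sum_congr rfl
        intro c hc
        rw [Finset.mem_inter] at hc
        simp [hc.2]
      rw [h1, hs_def]
      apply Finset.sum_subset Finset.inter_subset_right
      intro c hcW hc
      exact hfP i c fun hcP => hc (Finset.mem_inter.mpr ⟨hcP, hcW⟩)
    rw [hsum]
    linarith
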